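/- (Apolarity Lemma, converse direction.) Let f ∈ ℂ[x,y]_d and let β_1, …, β_r ∈ ℂ be pairwise distinct with 1 ≤ r ≤ d+1. If ∏_{ℓ=1}^{r} (∂y − β_ℓ ∂x) ∘ f = 0, then there exist λ_1, …, λ_r ∈ ℂ such that f(x,y) = Σ_{k=1}^{r} λ_k (x+β_k y)^d. -/

import Mathlib

open MvPolynomial

/-- The linear form `x + β y` in `ℂ[x,y]`. -/
noncomputable def linForm (β : ℂ) : MvPolynomial (Fin 2) ℂ := X 0 + C β * X 1

/-- The first-order differential operator `∂y − β ∂x` acting on `ℂ[x,y]`. -/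
noncomputable def Dop (β : ℂ) : Module.End ℂ (MvPolynomial (Fin 2) ℂ) :=
  (pderiv (1 : Fin 2)).toLinearMap - β • (pderiv (0 : Fin 2)).toLinearMap

lemma coeff_pderiv (i : Fin 2) (f : MvPolynomial (Fin 2) ℂ) (m : Fin 2 →₀ ℕ) :
    coeff m (pderiv i f) = ((m i : ℂ) + 1) * coeff (m + Finsupp.single i 1) f := by
  induction f using MvPolynomial.induction_on' with
  | add p q hp hq => simp [hp, hq, mul_add]
  | monomial s a =>
    rw [pderiv_monomial, coeff_monomial, coeff_monomial]
    by_cases h : s = m + Finsupp.single i 1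
    · subst h
      have h1 : m + Finsupp.single i 1 - Finsupp.single i 1 = m := by
        ext j; simp [Finsupp.single_apply]
      have h2 : ((m + Finsupp.single i 1 : Fin 2 →₀ ℕ)) i = m i + 1 := by
        simp [Finsupp.single_apply]
      rw [if_pos h1, if_pos rfl, h2]
      push_cast; ring
    · rw [if_neg h]
      split_ifs with h2
      · -- s - single i 1 = m, but s ≠ m + single i 1, so s i = 0
        have hsi : s i = 0 := by
          by_contra hne
          apply h
          have : Finsupp.single i 1 ≤ s := by
            rw [Finsupp.single_le_iff]; omega
          rw [← h2, tsub_add_cancel_of_le this]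
        simp [hsi]
      · ring

lemma degree_fin2 (m : Fin 2 →₀ ℕ) : m.degree = m 0 + m 1 := by
  rw [Finsupp.degree_apply, Finset.sum_subset (Finset.subset_univ m.support)
    (fun x _ hx => by simpa using Finsupp.notMem_support_iff.mp hx)]
  exact Fin.sum_univ_two m

lemma linForm_pow (b : ℂ) (d : ℕ) : (linForm b) ^ d =
    ∑ k ∈ Finset.range (d + 1),
      monomial (Finsupp.single 0 k + Finsupp.single 1 (d - k)) (b ^ (d - k) * d.choose k) := by
  rw [linForm, add_pow]
  refine Finset.sum_congr rfl fun k _ => ?_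
  have e1 : (C b * X 1 : MvPolynomial (Fin 2) ℂ) ^ (d - k)
      = monomial (Finsupp.single 1 (d - k)) (b ^ (d - k)) := by
    rw [mul_pow, ← C_pow, X_pow_eq_monomial, C_mul_monomial, mul_one]
  rw [e1, X_pow_eq_monomial, monomial_mul, ← MvPolynomial.C_eq_coe_nat,
    mul_comm _ (C ((d.choose k : ℂ))), C_mul_monomial]
  congr 1
  ring

lemma single_sum_eq_iff (d k : ℕ) (hk : k ≤ d) (m : Fin 2 →₀ ℕ) :
    (Finsupp.single (0 : Fin 2) k + Finsupp.single 1 (d - k) = m) ↔ (k = m 0 ∧ d - k = m 1) := by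
  constructor
  · rintro rfl; simp [Finsupp.single_apply]
  · rintro ⟨h0, h1⟩
    ext j
    fin_cases j <;> simp [Finsupp.single_apply, ← h0, ← h1]

lemma coeff_C_mul_linForm_pow (c b : ℂ) (d : ℕ) (m : Fin 2 →₀ ℕ) :
    coeff m (C c * (linForm b) ^ d) =
      if m 0 + m 1 = d then c * d.choose (m 1) * b ^ (m 1) else 0 := by
  rw [coeff_C_mul, linForm_pow, coeff_sum]
  simp only [coeff_monomial]
  split_ifs with h
  · rw [Finset.sum_eq_single (m 0)]
    · rw [if_pos ((single_sum_eq_iff d (m 0) (by omega) m).mpr ⟨rfl, by omega⟩)]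
      rw [show d - m 0 = m 1 by omega, show m 0 = d - m 1 by omega,
        Nat.choose_symm (by omega)]; ring
    · intro k hk hne
      rw [if_neg]
      intro hc
      exact hne ((single_sum_eq_iff d k (by simp at hk; omega) m).mp hc).1
    · intro h; simp at h; omega
  · rw [Finset.sum_eq_zero, mul_zero]
    intro k hk
    rw [if_neg]
    intro hc
    obtain ⟨h0, h1⟩ := (single_sum_eq_iff d k (by simp at hk; omega) m).mp hc
    simp at hk; omega

lemma fin2_eq_single_add (m : Fin 2 →₀ ℕ) :
    m = Finsupp.single 0 (m 0) + Finsupp.single 1 (m 1) := by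
  ext j; fin_cases j <;> simp [Finsupp.single_apply]

lemma base_case (d : ℕ) (b : ℂ) (f : MvPolynomial (Fin 2) ℂ) (hf : f.IsHomogeneous d)
    (hD : Dop b f = 0) : ∃ c : ℂ, f = C c * (linForm b) ^ d := by
  set c : ℂ := coeff (Finsupp.single 0 d) f with hc
  have hrel : ∀ m : Fin 2 →₀ ℕ, ((m 1 : ℂ) + 1) * coeff (m + Finsupp.single 1 1) f
      = b * (((m 0 : ℂ) + 1) * coeff (m + Finsupp.single 0 1) f) := by
    intro m
    have h0 : pderiv (1 : Fin 2) f = b • pderiv (0 : Fin 2) f := by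
      have := hD
      rw [Dop] at this
      simp only [LinearMap.sub_apply, LinearMap.smul_apply, Derivation.coeFn_coe] at this
      rw [sub_eq_zero] at this
      exact this
    have := congrArg (coeff m) h0
    rw [coeff_pderiv] at this
    rw [this, coeff_smul, smul_eq_mul, coeff_pderiv]
  have key : ∀ i : ℕ, i ≤ d →
      coeff (Finsupp.single 0 (d - i) + Finsupp.single 1 i) f = c * d.choose i * b ^ i := by
    intro i
    induction i with
    | zero =>
      intro _
      simp [hc]
    | succ i ih =>
      intro hi
      have ih' := ih (by omega)
      have hr := hrel (Finsupp.single 0 (d - (i + 1)) + Finsupp.single 1 i)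
      have e0 : ((Finsupp.single (0 : Fin 2) (d - (i+1)) + Finsupp.single 1 i : Fin 2 →₀ ℕ)) 0
          = d - (i + 1) := by simp [Finsupp.single_apply]
      have e1 : ((Finsupp.single (0 : Fin 2) (d - (i+1)) + Finsupp.single 1 i : Fin 2 →₀ ℕ)) 1
          = i := by simp [Finsupp.single_apply]
      have e2 : (Finsupp.single (0 : Fin 2) (d - (i+1)) + Finsupp.single 1 i)
          + Finsupp.single 1 1
          = Finsupp.single 0 (d - (i+1)) + Finsupp.single 1 (i + 1) := by
        ext j; fin_cases j <;> simp [Finsupp.single_apply]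
      have e3 : (Finsupp.single (0 : Fin 2) (d - (i+1)) + Finsupp.single 1 i)
          + Finsupp.single 0 1
          = Finsupp.single 0 (d - i) + Finsupp.single 1 i := by
        ext j; fin_cases j <;> simp [Finsupp.single_apply] <;> omega
      rw [e0, e1, e2, e3, ih'] at hr
      -- hr : (i+1) * coeff (target) = b * ((d - (i+1) + 1) * (c * choose d i * b ^ i))
      have hcast : ((d - (i + 1) : ℕ) : ℂ) + 1 = ((d - i : ℕ) : ℂ) := by
        have : (d - (i + 1)) + 1 = d - i := by omega
        rw [← this]; push_cast; ring
      rw [hcast] at hr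
      have hne : ((i : ℂ) + 1) ≠ 0 := by
        have : ((i : ℂ) + 1) = ((i + 1 : ℕ) : ℂ) := by push_cast; ring
        rw [this]; exact_mod_cast Nat.succ_ne_zero i
      apply mul_left_cancel₀ hne
      rw [hr]
      have hchoose : ((d.choose (i + 1) : ℂ)) * ((i : ℂ) + 1)
          = ((d.choose i : ℂ)) * ((d - i : ℕ) : ℂ) := by
        have := Nat.choose_succ_right_eq d i
        have h2 : (d.choose (i + 1) * (i + 1) : ℕ) = d.choose i * (d - i) := this
        exact_mod_cast congrArg (Nat.cast : ℕ → ℂ) h2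
      linear_combination (-c * b ^ (i + 1)) * hchoose
  refine ⟨c, ?_⟩
  ext m
  rw [coeff_C_mul_linForm_pow]
  split_ifs with h
  · have := key (m 1) (by omega)
    rw [show d - m 1 = m 0 by omega] at this
    rw [← fin2_eq_single_add] at this
    exact this
  · apply hf.coeff_eq_zero
    rw [degree_fin2]
    exact h

lemma Dop_linForm_pow (a b : ℂ) (n : ℕ) :
    Dop b ((linForm a) ^ n) = C ((n : ℂ) * (a - b)) * (linForm a) ^ (n - 1) := by
  rw [Dop]
  simp only [LinearMap.sub_apply, LinearMap.smul_apply, Derivation.coeFn_coe]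
  rw [pderiv_pow, pderiv_pow]
  have h1 : pderiv (1 : Fin 2) (linForm a) = C a := by simp [linForm]
  have h0 : pderiv (0 : Fin 2) (linForm a) = 1 := by simp [linForm]
  rw [h1, h0, smul_eq_C_mul, ← MvPolynomial.C_eq_coe_nat, map_mul, map_sub]
  ring

lemma linForm_isHomogeneous (b : ℂ) : (linForm b).IsHomogeneous 1 :=
  (isHomogeneous_X _ _).add (isHomogeneous_C_mul_X _ _)

lemma linForm_pow_isHomogeneous (b : ℂ) (d : ℕ) : ((linForm b) ^ d).IsHomogeneous d := by
  simpa using (linForm_isHomogeneous b).pow d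

lemma pderiv_isHomogeneous (i : Fin 2) (d : ℕ) (f : MvPolynomial (Fin 2) ℂ)
    (hf : f.IsHomogeneous d) : (pderiv i f).IsHomogeneous (d - 1) := by
  intro m hm
  rw [coeff_pderiv] at hm
  have h2 : coeff (m + Finsupp.single i 1) f ≠ 0 := by
    intro h; rw [h, mul_zero] at hm; exact hm rfl
  have h3 := hf h2
  rw [Pi.one_def, ← Finsupp.degree_eq_weight_one, degree_fin2] at h3 ⊢
  have hi0 : ((m + Finsupp.single i 1 : Fin 2 →₀ ℕ)) 0 = m 0 + (Finsupp.single i 1) 0 := rfl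
  have hi1 : ((m + Finsupp.single i 1 : Fin 2 →₀ ℕ)) 1 = m 1 + (Finsupp.single i 1) 1 := rfl
  rw [hi0, hi1] at h3
  have : (Finsupp.single i 1) 0 + (Finsupp.single i 1) 1 = 1 := by
    fin_cases i <;> simp [Finsupp.single_apply]
  omega

lemma Dop_isHomogeneous (b : ℂ) (d : ℕ) (f : MvPolynomial (Fin 2) ℂ)
    (hf : f.IsHomogeneous d) : (Dop b f).IsHomogeneous (d - 1) := by
  rw [Dop]
  simp only [LinearMap.sub_apply, LinearMap.smul_apply, Derivation.coeFn_coe]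
  rw [smul_eq_C_mul]
  exact (pderiv_isHomogeneous 1 d f hf).sub ((pderiv_isHomogeneous 0 d f hf).C_mul b)

lemma aux_induction (r : ℕ) : ∀ (d : ℕ), r + 1 ≤ d + 1 →
    ∀ (f : MvPolynomial (Fin 2) ℂ), f.IsHomogeneous d →
    ∀ (β : Fin (r + 1) → ℂ), Function.Injective β →
    (List.ofFn fun ℓ : Fin (r + 1) => Dop (β ℓ)).prod f = 0 →
    ∃ lam : Fin (r + 1) → ℂ, f = ∑ k, C (lam k) * (linForm (β k)) ^ d := by
  induction r with
  | zero =>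
    intro d _ f hf β hβ hann
    rw [List.ofFn_succ, List.ofFn_zero, List.prod_cons, List.prod_nil, mul_one] at hann
    obtain ⟨c, hc⟩ := base_case d (β 0) f hf hann
    exact ⟨fun _ => c, by rw [hc, Fin.sum_univ_one]⟩
  | succ r ih =>
    intro d hrd f hf β hβ hann
    have hd1 : 1 ≤ d := by omega
    rw [List.ofFn_succ', List.prod_concat, Module.End.mul_apply] at hann
    set g := Dop (β (Fin.last (r + 1))) f with hg
    have hghom : g.IsHomogeneous (d - 1) := Dop_isHomogeneous _ _ _ hf
    obtain ⟨lam', hlam'⟩ := ih (d - 1) (by omega) g hghom (fun i => β i.castSucc)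
      (fun i j hij => Fin.castSucc_injective _ (hβ hij)) hann
    set μ : Fin (r + 1) → ℂ :=
      fun k => lam' k / ((d : ℂ) * (β k.castSucc - β (Fin.last (r + 1)))) with hμ
    have hden : ∀ k : Fin (r + 1), (d : ℂ) * (β k.castSucc - β (Fin.last (r + 1))) ≠ 0 := by
      intro k
      apply mul_ne_zero
      · exact_mod_cast Nat.one_le_iff_ne_zero.mp hd1
      · rw [sub_ne_zero]
        intro hc
        exact absurd (hβ hc) (Fin.ne_last_of_lt (Fin.castSucc_lt_last k))
    set h := f - ∑ k, C (μ k) * (linForm (β k.castSucc)) ^ d with hh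
    have hhom : h.IsHomogeneous d := by
      apply hf.sub
      rw [← mem_homogeneousSubmodule]
      apply Submodule.sum_mem
      intro k _
      rw [mem_homogeneousSubmodule]
      exact (linForm_pow_isHomogeneous _ d).C_mul _
    have hDh : Dop (β (Fin.last (r + 1))) h = 0 := by
      rw [hh, map_sub, map_sum]
      have hterm : ∀ k : Fin (r + 1),
          Dop (β (Fin.last (r + 1))) (C (μ k) * (linForm (β k.castSucc)) ^ d)
          = C (lam' k) * (linForm (β k.castSucc)) ^ (d - 1) := by
        intro k
        rw [← smul_eq_C_mul, map_smul, Dop_linForm_pow, smul_eq_C_mul, ← mul_assoc, ← map_mul]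
        congr 2
        exact div_mul_cancel₀ _ (hden k)
      rw [Finset.sum_congr rfl fun k _ => hterm k, ← hlam', ← hg, sub_self]
    obtain ⟨c, hcf⟩ := base_case d (β (Fin.last (r + 1))) h hhom hDh
    refine ⟨Fin.snoc μ c, ?_⟩
    rw [Fin.sum_univ_castSucc]
    have hfe : f = h + ∑ k, C (μ k) * (linForm (β k.castSucc)) ^ d := by rw [hh]; ring
    rw [hfe, hcf]
    simp only [Fin.snoc_castSucc, Fin.snoc_last]
    rw [add_comm]

/-- (Apolarity Lemma, converse direction.) Let `f ∈ ℂ[x,y]_d` and let `β_1, …, β_r ∈ ℂ` be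
pairwise distinct with `1 ≤ r ≤ d+1`. If `∏_{ℓ=1}^{r} (∂y − β_ℓ ∂x) ∘ f = 0`, then there
exist `λ_1, …, λ_r ∈ ℂ` such that `f = Σ_{k=1}^{r} λ_k (x+β_k y)^d`. -/
theorem apolarity_converse (d r : ℕ) (hr : 1 ≤ r) (hrd : r ≤ d + 1)
    (f : MvPolynomial (Fin 2) ℂ) (hf : f.IsHomogeneous d)
    (β : Fin r → ℂ) (hβ : Function.Injective β)
    (hann : (List.ofFn fun ℓ : Fin r => Dop (β ℓ)).prod f = 0) :
    ∃ lam : Fin r → ℂ, f = ∑ k, C (lam k) * (linForm (β k)) ^ d := by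
  obtain ⟨r', rfl⟩ := Nat.exists_eq_succ_of_ne_zero (Nat.one_le_iff_ne_zero.mp hr)
  exact aux_induction r' d hrd f hf β hβ hann
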